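/- Let (Ω, P) be a probability space and, for each i ∈ {1, …, m+1}, let θ_{i,1}, …, θ_{i,D} : Ω → ℝ^n be random vectors each with distribution μ_i, a Borel probability measure on ℝ^n that is symmetric (invariant under θ ↦ −θ). Assume that for all i ≠ j and all l, the random vectors θ_{i,l} and θ_{j,l} are independent. Let ψ_i(·)(ω) be the random Fourier basis built from θ_{i,1}(ω), …, θ_{i,D}(ω), let φ_d be the AD compound basis of ψ_1, …, ψ_{m+1}, and define κ_i(v) = ∫ cos(θᵀv) dμ_i(θ). Then for all x, x' ∈ ℝ^n and u, u' ∈ ℝ^m, E[φ_d(x,u)ᵀ φ_d(x',u')] = k_d((x,u),(x',u')), where k_d is the AD compound kernel of κ_1, …, κ_{m+1}. -/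

import Mathlib

open Matrix MeasureTheory

/-- The random Fourier basis built from `D` weight vectors `θ 0, …, θ (D-1) ∈ ℝⁿ`:
`ψ(x) = (1/√D) (sin(θ₁ᵀx), cos(θ₁ᵀx), …, sin(θ_Dᵀx), cos(θ_Dᵀx)) ∈ ℝ^{2D}`. -/
noncomputable def rfBasis {n D : ℕ} (θ : Fin D → Fin n → ℝ) (x : Fin n → ℝ) :
    Fin D × Bool → ℝ := fun p =>
  (1 / Real.sqrt D) * (if p.2 then Real.cos (θ p.1 ⬝ᵥ x) else Real.sin (θ p.1 ⬝ᵥ x))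

/-- The Affine Dense (AD) compound basis of `ψ 0, …, ψ m`:
`φ_d(x, u) = ∑_{i=1}^m uᵢ ψᵢ(x) + ψ_{m+1}(x)`. -/
def adBasis {n m : ℕ} {ι : Type*} (ψ : Fin (m + 1) → (Fin n → ℝ) → ι → ℝ)
    (x : Fin n → ℝ) (u : Fin m → ℝ) : ι → ℝ :=
  (∑ i : Fin m, u i • ψ i.castSucc x) + ψ (Fin.last m) x

/-- The Affine Dense (AD) compound kernel of `κ 0, …, κ m`: writing `y = (u, 1)` and
`y' = (u', 1)`,
`k_d((x,u),(x',u')) = ∑ᵢ yᵢ yᵢ' κᵢ(x - x') + ∑_{i ≠ j} yᵢ yⱼ' κᵢ(x) κⱼ(x')`. -/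
def adKernel {n m : ℕ} (κ : Fin (m + 1) → (Fin n → ℝ) → ℝ)
    (x x' : Fin n → ℝ) (u u' : Fin m → ℝ) : ℝ :=
  (∑ i : Fin (m + 1),
      Fin.snoc (α := fun _ => ℝ) u 1 i * Fin.snoc (α := fun _ => ℝ) u' 1 i * κ i (x - x')) +
    ∑ i : Fin (m + 1), ∑ j : Fin (m + 1),
      if i ≠ j then
        Fin.snoc (α := fun _ => ℝ) u 1 i * Fin.snoc (α := fun _ => ℝ) u' 1 j * κ i x * κ j x'
      else 0

/- Auxiliary lemmas -/

lemma cont_dot {n : ℕ} (v : Fin n → ℝ) : Continuous fun t : Fin n → ℝ => t ⬝ᵥ v := by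
  unfold dotProduct; fun_prop

lemma integrable_of_bdd {Ω : Type*} [MeasurableSpace Ω] {P : Measure Ω} [IsProbabilityMeasure P]
    {g : Ω → ℝ} {C : ℝ} (hg : Measurable g) (hb : ∀ ω, |g ω| ≤ C) : Integrable g P :=
  ⟨hg.aestronglyMeasurable, HasFiniteIntegral.of_bounded (C := C) (ae_of_all _ hb)⟩

lemma integral_cos_map {n : ℕ} {Ω : Type*} [MeasurableSpace Ω] {P : Measure Ω}
    {f : Ω → Fin n → ℝ} (hf : Measurable f) (v : Fin n → ℝ) :
    ∫ ω, Real.cos (f ω ⬝ᵥ v) ∂P = ∫ t, Real.cos (t ⬝ᵥ v) ∂(Measure.map f P) :=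
  (integral_map hf.aemeasurable
    (Real.continuous_cos.comp (cont_dot v)).aestronglyMeasurable).symm

lemma integral_sin_map {n : ℕ} {Ω : Type*} [MeasurableSpace Ω] {P : Measure Ω}
    {f : Ω → Fin n → ℝ} (hf : Measurable f) (v : Fin n → ℝ) :
    ∫ ω, Real.sin (f ω ⬝ᵥ v) ∂P = ∫ t, Real.sin (t ⬝ᵥ v) ∂(Measure.map f P) :=
  (integral_map hf.aemeasurable
    (Real.continuous_sin.comp (cont_dot v)).aestronglyMeasurable).symm

lemma integral_sin_zero {n : ℕ} (μ : Measure (Fin n → ℝ))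
    (hsym : Measure.map (fun t : Fin n → ℝ => -t) μ = μ) (v : Fin n → ℝ) :
    ∫ t, Real.sin (t ⬝ᵥ v) ∂μ = 0 := by
  have h1 : ∫ t, Real.sin (t ⬝ᵥ v) ∂μ = ∫ t, Real.sin ((-t) ⬝ᵥ v) ∂μ := by
    conv_lhs => rw [← hsym]
    exact (integral_map (φ := fun t : Fin n → ℝ => -t)
      (f := fun t => Real.sin (t ⬝ᵥ v)) measurable_neg.aemeasurable
      (Real.continuous_sin.comp (cont_dot v)).aestronglyMeasurable)
  have h2 : ∀ t : Fin n → ℝ, Real.sin ((-t) ⬝ᵥ v) = -Real.sin (t ⬝ᵥ v) := fun t => by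
    rw [neg_dotProduct, Real.sin_neg]
  simp only [h2, integral_neg] at h1
  linarith

lemma adBasis_eq {n m : ℕ} {ι : Type*} (ψ : Fin (m + 1) → (Fin n → ℝ) → ι → ℝ)
    (x : Fin n → ℝ) (u : Fin m → ℝ) :
    adBasis ψ x u = ∑ i, Fin.snoc (α := fun _ => ℝ) u 1 i • ψ i x := by
  rw [Fin.sum_univ_castSucc]
  simp [adBasis]

lemma rfBasis_dot {n D : ℕ} (a b : Fin D → Fin n → ℝ) (x x' : Fin n → ℝ) :
    (∑ p : Fin D × Bool, rfBasis a x p * rfBasis b x' p) = (1 / (D : ℝ)) * ∑ l : Fin D,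
      (Real.cos (a l ⬝ᵥ x) * Real.cos (b l ⬝ᵥ x') +
       Real.sin (a l ⬝ᵥ x) * Real.sin (b l ⬝ᵥ x')) := by
  have hs : (1 / Real.sqrt D) * (1 / Real.sqrt D) = 1 / (D : ℝ) := by
    rw [div_mul_div_comm, one_mul, Real.mul_self_sqrt (Nat.cast_nonneg D)]
  simp only [rfBasis, Fintype.sum_prod_type]
  rw [Finset.mul_sum]
  refine Finset.sum_congr rfl fun l _ => ?_
  rw [Fintype.sum_bool]
  simp only [ite_true, Bool.false_eq_true, ite_false]
  rw [← hs]
  ring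

/-- if the weights `θ i l` of the random Fourier bases `ψᵢ` have symmetric
distributions `μ i` and `θ i l`, `θ j l` are independent for `i ≠ j`, then the
expectation of the dot product of the AD compound random Fourier features equals the
AD compound kernel of `κᵢ(v) = ∫ cos(θᵀv) dμᵢ(θ)`. -/
theorem stmt_6 {n m D : ℕ} (hD : 0 < D)
    {Ω : Type*} [MeasurableSpace Ω] (P : Measure Ω) [IsProbabilityMeasure P]
    (θ : Fin (m + 1) → Fin D → Ω → (Fin n → ℝ))
    (μ : Fin (m + 1) → Measure (Fin n → ℝ))
    [∀ i, IsProbabilityMeasure (μ i)]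
    (hmeas : ∀ i l, Measurable (θ i l))
    (hdist : ∀ i l, Measure.map (θ i l) P = μ i)
    (hsym : ∀ i, Measure.map (fun t : Fin n → ℝ => -t) (μ i) = μ i)
    (hindep : ∀ i j l, i ≠ j → ProbabilityTheory.IndepFun (θ i l) (θ j l) P)
    (κ : Fin (m + 1) → (Fin n → ℝ) → ℝ)
    (hκ : ∀ i v, κ i v = ∫ t, Real.cos (t ⬝ᵥ v) ∂(μ i))
    (x x' : Fin n → ℝ) (u u' : Fin m → ℝ) :
    (∫ ω, adBasis (fun i => rfBasis (fun l => θ i l ω)) x u ⬝ᵥ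
        adBasis (fun i => rfBasis (fun l => θ i l ω)) x' u' ∂P)
      = adKernel κ x x' u u' := by
  set y : Fin (m + 1) → ℝ := Fin.snoc (α := fun _ => ℝ) u 1 with hydef
  set y' : Fin (m + 1) → ℝ := Fin.snoc (α := fun _ => ℝ) u' 1 with hy'def
  set G : Fin (m + 1) → Fin (m + 1) → Ω → ℝ := fun i j ω =>
    (1 / (D : ℝ)) * ∑ l : Fin D,
      (Real.cos (θ i l ω ⬝ᵥ x) * Real.cos (θ j l ω ⬝ᵥ x') +
       Real.sin (θ i l ω ⬝ᵥ x) * Real.sin (θ j l ω ⬝ᵥ x')) with hGdef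
  have mcos : ∀ (i : Fin (m + 1)) (l : Fin D) (v : Fin n → ℝ),
      Measurable fun ω => Real.cos (θ i l ω ⬝ᵥ v) := fun i l v =>
    ((Real.continuous_cos.comp (cont_dot v)).measurable).comp (hmeas i l)
  have msin : ∀ (i : Fin (m + 1)) (l : Fin D) (v : Fin n → ℝ),
      Measurable fun ω => Real.sin (θ i l ω ⬝ᵥ v) := fun i l v =>
    ((Real.continuous_sin.comp (cont_dot v)).measurable).comp (hmeas i l)
  have icos : ∀ (i : Fin (m + 1)) (l : Fin D) (v : Fin n → ℝ),
      Integrable (fun ω => Real.cos (θ i l ω ⬝ᵥ v)) P := fun i l v =>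
    integrable_of_bdd (C := 1) (mcos i l v) fun ω => Real.abs_cos_le_one _
  have isin : ∀ (i : Fin (m + 1)) (l : Fin D) (v : Fin n → ℝ),
      Integrable (fun ω => Real.sin (θ i l ω ⬝ᵥ v)) P := fun i l v =>
    integrable_of_bdd (C := 1) (msin i l v) fun ω => Real.abs_sin_le_one _
  have iterm : ∀ (i j : Fin (m + 1)) (l : Fin D),
      Integrable (fun ω => Real.cos (θ i l ω ⬝ᵥ x) * Real.cos (θ j l ω ⬝ᵥ x') +
        Real.sin (θ i l ω ⬝ᵥ x) * Real.sin (θ j l ω ⬝ᵥ x')) P := by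
    intro i j l
    refine integrable_of_bdd (C := 2)
      (((mcos i l x).mul (mcos j l x')).add ((msin i l x).mul (msin j l x'))) fun ω => ?_
    calc |Real.cos (θ i l ω ⬝ᵥ x) * Real.cos (θ j l ω ⬝ᵥ x') +
        Real.sin (θ i l ω ⬝ᵥ x) * Real.sin (θ j l ω ⬝ᵥ x')|
        ≤ |Real.cos (θ i l ω ⬝ᵥ x) * Real.cos (θ j l ω ⬝ᵥ x')| +
          |Real.sin (θ i l ω ⬝ᵥ x) * Real.sin (θ j l ω ⬝ᵥ x')| := abs_add_le _ _
      _ ≤ 1 * 1 + 1 * 1 := by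
          rw [abs_mul, abs_mul]
          gcongr <;>
            first
              | exact abs_nonneg _
              | exact Real.abs_cos_le_one _
              | exact Real.abs_sin_le_one _
      _ ≤ 2 := by norm_num
  have ipc : ∀ (i j : Fin (m + 1)) (l : Fin D),
      Integrable (fun ω => Real.cos (θ i l ω ⬝ᵥ x) * Real.cos (θ j l ω ⬝ᵥ x')) P := by
    intro i j l
    refine integrable_of_bdd (C := 1) ((mcos i l x).mul (mcos j l x')) fun ω => ?_
    rw [abs_mul]
    exact mul_le_one₀ (Real.abs_cos_le_one _) (abs_nonneg _) (Real.abs_cos_le_one _)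
  have ips : ∀ (i j : Fin (m + 1)) (l : Fin D),
      Integrable (fun ω => Real.sin (θ i l ω ⬝ᵥ x) * Real.sin (θ j l ω ⬝ᵥ x')) P := by
    intro i j l
    refine integrable_of_bdd (C := 1) ((msin i l x).mul (msin j l x')) fun ω => ?_
    rw [abs_mul]
    exact mul_le_one₀ (Real.abs_sin_le_one _) (abs_nonneg _) (Real.abs_sin_le_one _)
  have hIntG : ∀ i j, Integrable (G i j) P := fun i j =>
    ((integrable_finset_sum _ fun l _ => iterm i j l).const_mul _)
  -- pointwise rewriting of the integrand
  have hpt : ∀ ω, (adBasis (fun i => rfBasis (fun l => θ i l ω)) x u ⬝ᵥ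
        adBasis (fun i => rfBasis (fun l => θ i l ω)) x' u')
      = ∑ i, ∑ j, y i * y' j * G i j ω := by
    intro ω
    rw [adBasis_eq, adBasis_eq, ← hydef, ← hy'def]
    simp only [dotProduct, Finset.sum_apply, Pi.smul_apply, smul_eq_mul, Finset.sum_mul_sum]
    rw [Finset.sum_comm]
    refine Finset.sum_congr rfl fun i _ => ?_
    rw [Finset.sum_comm]
    refine Finset.sum_congr rfl fun j _ => ?_
    have h1 : ∀ p : Fin D × Bool,
        (y i * rfBasis (fun l => θ i l ω) x p) * (y' j * rfBasis (fun l => θ j l ω) x' p)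
        = (y i * y' j) * (rfBasis (fun l => θ i l ω) x p * rfBasis (fun l => θ j l ω) x' p) :=
      fun p => by ring
    simp only [h1]
    rw [← Finset.mul_sum, rfBasis_dot]
  -- value of each expectation
  have hEG : ∀ i j, (∫ ω, G i j ω ∂P)
      = if i = j then κ i (x - x') else κ i x * κ j x' := by
    intro i j
    rw [hGdef]
    simp only []
    rw [integral_const_mul, integral_finset_sum _ fun l _ => iterm i j l]
    have hDne : (D : ℝ) ≠ 0 := Nat.cast_ne_zero.mpr hD.ne'
    by_cases hij : i = j
    · subst hij
      rw [if_pos rfl]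
      have hval : ∀ l : Fin D, (∫ ω, (Real.cos (θ i l ω ⬝ᵥ x) * Real.cos (θ i l ω ⬝ᵥ x') +
          Real.sin (θ i l ω ⬝ᵥ x) * Real.sin (θ i l ω ⬝ᵥ x')) ∂P) = κ i (x - x') := by
        intro l
        have h2 : ∀ ω, Real.cos (θ i l ω ⬝ᵥ x) * Real.cos (θ i l ω ⬝ᵥ x') +
            Real.sin (θ i l ω ⬝ᵥ x) * Real.sin (θ i l ω ⬝ᵥ x')
            = Real.cos (θ i l ω ⬝ᵥ (x - x')) := fun ω => by
          rw [dotProduct_sub, Real.cos_sub]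
        simp only [h2]
        rw [integral_cos_map (hmeas i l), hdist, ← hκ]
      rw [Finset.sum_congr rfl fun l _ => hval l, Finset.sum_const, Finset.card_univ,
        Fintype.card_fin, nsmul_eq_mul]
      field_simp
    · rw [if_neg hij]
      have hval : ∀ l : Fin D, (∫ ω, (Real.cos (θ i l ω ⬝ᵥ x) * Real.cos (θ j l ω ⬝ᵥ x') +
          Real.sin (θ i l ω ⬝ᵥ x) * Real.sin (θ j l ω ⬝ᵥ x')) ∂P) = κ i x * κ j x' := by
        intro l
        have indc : ProbabilityTheory.IndepFun (fun ω => Real.cos (θ i l ω ⬝ᵥ x))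
            (fun ω => Real.cos (θ j l ω ⬝ᵥ x')) P :=
          (hindep i j l hij).comp ((Real.continuous_cos.comp (cont_dot x)).measurable)
            ((Real.continuous_cos.comp (cont_dot x')).measurable)
        have inds : ProbabilityTheory.IndepFun (fun ω => Real.sin (θ i l ω ⬝ᵥ x))
            (fun ω => Real.sin (θ j l ω ⬝ᵥ x')) P :=
          (hindep i j l hij).comp ((Real.continuous_sin.comp (cont_dot x)).measurable)
            ((Real.continuous_sin.comp (cont_dot x')).measurable)
        rw [integral_add (ipc i j l) (ips i j l)]
        have hc : (∫ ω, Real.cos (θ i l ω ⬝ᵥ x) * Real.cos (θ j l ω ⬝ᵥ x') ∂P)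
            = (∫ ω, Real.cos (θ i l ω ⬝ᵥ x) ∂P) * ∫ ω, Real.cos (θ j l ω ⬝ᵥ x') ∂P :=
          ProbabilityTheory.IndepFun.integral_fun_mul_eq_mul_integral indc (icos i l x).aestronglyMeasurable (icos j l x').aestronglyMeasurable
        have hs : (∫ ω, Real.sin (θ i l ω ⬝ᵥ x) * Real.sin (θ j l ω ⬝ᵥ x') ∂P)
            = (∫ ω, Real.sin (θ i l ω ⬝ᵥ x) ∂P) * ∫ ω, Real.sin (θ j l ω ⬝ᵥ x') ∂P :=
          ProbabilityTheory.IndepFun.integral_fun_mul_eq_mul_integral inds (isin i l x).aestronglyMeasurable (isin j l x').aestronglyMeasurable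
        rw [hc, hs, integral_cos_map (hmeas i l), hdist, integral_cos_map (hmeas j l), hdist,
          integral_sin_map (hmeas i l), hdist, integral_sin_map (hmeas j l), hdist,
          integral_sin_zero _ (hsym i), ← hκ, ← hκ]
        ring
      rw [Finset.sum_congr rfl fun l _ => hval l, Finset.sum_const, Finset.card_univ,
        Fintype.card_fin, nsmul_eq_mul]
      field_simp
  -- put everything together
  calc (∫ ω, adBasis (fun i => rfBasis (fun l => θ i l ω)) x u ⬝ᵥ
        adBasis (fun i => rfBasis (fun l => θ i l ω)) x' u' ∂P)
      = ∫ ω, ∑ i, ∑ j, y i * y' j * G i j ω ∂P := by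
        exact integral_congr_ae (ae_of_all _ hpt)
    _ = ∑ i, ∑ j, y i * y' j * ∫ ω, G i j ω ∂P := by
        rw [integral_finset_sum _ fun i _ =>
          integrable_finset_sum _ fun j _ => ((hIntG i j).const_mul _)]
        refine Finset.sum_congr rfl fun i _ => ?_
        rw [integral_finset_sum _ fun j _ => ((hIntG i j).const_mul _)]
        refine Finset.sum_congr rfl fun j _ => ?_
        exact integral_const_mul _ _
    _ = adKernel κ x x' u u' := by
        simp only [hEG]
        simp only [adKernel, ← hydef, ← hy'def]
        have hsplit : ∀ i j : Fin (m + 1),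
            y i * y' j * (if i = j then κ i (x - x') else κ i x * κ j x')
            = (if i = j then y i * y' i * κ i (x - x') else 0)
              + (if i ≠ j then y i * y' j * κ i x * κ j x' else 0) := by
          intro i j
          by_cases h : i = j
          · subst h; simp
          · simp only [if_neg h, if_pos h, zero_add]
            ring
        simp only [hsplit]
        rw [Finset.sum_congr rfl fun i _ => Finset.sum_add_distrib, Finset.sum_add_distrib]
        congr 1
        refine Finset.sum_congr rfl fun i _ => ?_
        simp [Finset.sum_ite_eq]
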